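/- Non-stationary telescoping estimate: let (V_n)_{n≥1} be a sequence of finite-dimensional normed spaces and f_t(n): V_n → V_{n+1}, t ∈ [0,1], invertible linear maps such that ‖f_t(n) - f_s(n)‖ ≤ L|t-s| and ‖f_t(n)⁻¹ - f_s(n)⁻¹‖ ≤ L|t-s| for all n, t, s. Suppose there exists c ≥ 1 such that ‖f_0(n)⋯f_0(j)‖ ≤ c·C(n) for all 1 ≤ j ≤ n, where C(n) := max(max_{1≤s≤n} ‖f_0(s)⋯f_0(1)‖², 1) and C(0) := 1. Then for all t ∈ [0,1] and n ≥ 1, ‖f_t(n)⋯f_t(1)‖ ≤ c·C(n)·exp(c·C(n)·L·t·n). -/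

import Mathlib

/-- The composition `f(j+n-1) ∘ ⋯ ∘ f(j) : V j →L V (j+n)` of a chain of
continuous linear maps `f n : V n →L V (n+1)`. -/
noncomputable def prodBetween {V : ℕ → Type*}
    [∀ n, NormedAddCommGroup (V n)] [∀ n, NormedSpace ℂ (V n)]
    (f : (n : ℕ) → V n →L[ℂ] V (n + 1)) (j : ℕ) :
    (n : ℕ) → (V j →L[ℂ] V (j + n))
  | 0 => ContinuousLinearMap.id ℂ (V j)
  | n + 1 => (f (j + n)).comp (prodBetween f j n)

section aux
variable {V : ℕ → Type*} [∀ n, NormedAddCommGroup (V n)] [∀ n, NormedSpace ℂ (V n)]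

/-- Transport along an equality of indices. -/
noncomputable def vcast {a b : ℕ} (h : a = b) : V a →L[ℂ] V b := by
  subst h; exact ContinuousLinearMap.id ℂ (V a)

@[simp] lemma vcast_rfl {a : ℕ} :
    (vcast (rfl : a = a) : V a →L[ℂ] V a) = ContinuousLinearMap.id ℂ (V a) := rfl

lemma prodBetween_succ (f : (n : ℕ) → V n →L[ℂ] V (n + 1)) (j n : ℕ) :
    prodBetween f j (n+1) = (f (j + n)).comp (prodBetween f j n) := rfl

lemma norm_vcast_comp {a b c : ℕ} (h : b = c) (A : V a →L[ℂ] V b) :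
    ‖(vcast h).comp A‖ = ‖A‖ := by
  subst h; rw [vcast_rfl, ContinuousLinearMap.id_comp]

lemma norm_comp_vcast {a b c : ℕ} (h : a = b) (A : V b →L[ℂ] V c) :
    ‖A.comp (vcast h)‖ = ‖A‖ := by
  subst h; rw [vcast_rfl, ContinuousLinearMap.comp_id]

lemma comp_vcast_swap (w : ∀ n, V n →L[ℂ] V (n+1)) {a b : ℕ} (h : a = b) (h' : a + 1 = b + 1) :
    (w b).comp (vcast h) = (vcast h').comp (w a) := by
  subst h; ext x; rfl

lemma prodBetween_bot (f : (n : ℕ) → V n →L[ℂ] V (n + 1)) (j : ℕ) :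
    ∀ k, prodBetween f j (k+1)
      = (vcast (by omega : (j+1)+k = j+(k+1))).comp ((prodBetween f (j+1) k).comp (f j))
  | 0 => by ext x; rfl
  | (k+1) => by
    have ih := prodBetween_bot f j k
    show (f (j + (k+1))).comp (prodBetween f j (k+1)) = _
    rw [ih]
    rw [← ContinuousLinearMap.comp_assoc, ← ContinuousLinearMap.comp_assoc,
      comp_vcast_swap f (by omega : (j+1)+k = j+(k+1)) (by omega)]
    ext x; rfl

lemma exp_sum_bound (x : ℝ) (m : ℕ) :
    1 + ∑ j ∈ Finset.range m, x * Real.exp (x * j) ≤ Real.exp (x * m) := by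
  have h1 : ∀ j ∈ Finset.range m,
      x * Real.exp (x * j) ≤ Real.exp (x * (j+1 : ℕ)) - Real.exp (x * j) := by
    intro j _
    have hexp : Real.exp (x * (j+1 : ℕ)) = Real.exp (x * j) * Real.exp x := by
      rw [← Real.exp_add]; push_cast; ring_nf
    have h2 : x + 1 ≤ Real.exp x := Real.add_one_le_exp x
    nlinarith [Real.exp_pos (x * j), Real.exp_pos x]
  have h3 := Finset.sum_le_sum h1
  have h4 := Finset.sum_range_sub (fun j => Real.exp (x * j)) m
  rw [h4] at h3
  simp only [Nat.cast_zero, mul_zero, Real.exp_zero] at h3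
  linarith

end aux

/-- Non-stationary telescoping estimate for a one-parameter family of chains of
invertible linear maps with uniformly Lipschitz parameter dependence. -/
theorem stmt11 {V : ℕ → Type*}
    [∀ n, NormedAddCommGroup (V n)] [∀ n, NormedSpace ℂ (V n)]
    [∀ n, FiniteDimensional ℂ (V n)]
    (f : ℝ → (n : ℕ) → V n →L[ℂ] V (n + 1))
    (g : ℝ → (n : ℕ) → V (n + 1) →L[ℂ] V n)
    (hinv₁ : ∀ t ∈ Set.Icc (0 : ℝ) 1, ∀ n,
      (g t n).comp (f t n) = ContinuousLinearMap.id ℂ (V n))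
    (hinv₂ : ∀ t ∈ Set.Icc (0 : ℝ) 1, ∀ n,
      (f t n).comp (g t n) = ContinuousLinearMap.id ℂ (V (n + 1)))
    (L : ℝ)
    (hLip : ∀ n, ∀ t ∈ Set.Icc (0 : ℝ) 1, ∀ s ∈ Set.Icc (0 : ℝ) 1,
      ‖f t n - f s n‖ ≤ L * |t - s|)
    (hLipInv : ∀ n, ∀ t ∈ Set.Icc (0 : ℝ) 1, ∀ s ∈ Set.Icc (0 : ℝ) 1,
      ‖g t n - g s n‖ ≤ L * |t - s|)
    (Cn : ℕ → ℝ)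
    (hCn : ∀ n, Cn n =
      max (⨆ s : Finset.Icc 1 n, ‖prodBetween (f 0) 0 (s : ℕ)‖ ^ 2) 1)
    (c : ℝ) (hc : 1 ≤ c)
    (hseg : ∀ j n : ℕ, j ≤ n → ‖prodBetween (f 0) j (n - j)‖ ≤ c * Cn n) :
    ∀ t ∈ Set.Icc (0 : ℝ) 1, ∀ n : ℕ, 1 ≤ n →
      ‖prodBetween (f t) 0 n‖ ≤ c * Cn n * Real.exp (c * Cn n * L * t * n) := by
  intro t ht n _hn
  obtain ⟨ht0, ht1⟩ := ht
  have hc0 : (0:ℝ) ≤ c := le_trans zero_le_one hc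
  have hCn1 : ∀ k, (1:ℝ) ≤ Cn k := by intro k; rw [hCn k]; exact le_max_right _ _
  have hCn0 : ∀ k, (0:ℝ) ≤ Cn k := fun k => le_trans zero_le_one (hCn1 k)
  have hL : 0 ≤ L := by
    have h := hLip 0 1 (by norm_num) 0 (by norm_num)
    have h2 : (0:ℝ) ≤ ‖f 1 0 - f 0 0‖ := norm_nonneg _
    rw [show |(1:ℝ) - 0| = 1 by norm_num, mul_one] at h
    linarith
  have hCmono : ∀ a b : ℕ, a ≤ b → Cn a ≤ Cn b := by
    intro a b hab
    rw [hCn a, hCn b]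
    apply max_le _ (le_max_right _ _)
    rcases Nat.eq_zero_or_pos a with rfl | ha
    · have hempty : IsEmpty (Finset.Icc 1 0 : Finset ℕ) := by
        simp [Finset.isEmpty_coe_sort]
        exact ⟨fun x => x.2⟩
      rw [@Real.iSup_of_isEmpty _ hempty]
      exact le_trans zero_le_one (le_max_right _ _)
    · have hne : Nonempty (Finset.Icc 1 a : Finset ℕ) :=
        ⟨⟨1, Finset.mem_Icc.2 ⟨le_refl 1, ha⟩⟩⟩
      apply ciSup_le
      intro s
      have hmem : (s : ℕ) ∈ Finset.Icc 1 b := by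
        have hs := s.2
        rw [Finset.mem_Icc] at hs ⊢
        omega
      refine le_trans ?_ (le_max_left _ _)
      exact le_ciSup (f := fun s' : (Finset.Icc 1 b : Finset ℕ) => ‖prodBetween (f 0) 0 (s' : ℕ)‖ ^ 2)
        (Set.Finite.bddAbove (Set.finite_range _)) (⟨(s : ℕ), hmem⟩ : (Finset.Icc 1 b : Finset ℕ))
  have hLt : ∀ k, ‖f t k - f 0 k‖ ≤ L * t := by
    intro k
    have h := hLip k t ⟨ht0, ht1⟩ 0 (by norm_num)
    rwa [sub_zero, abs_of_nonneg ht0] at h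
  have hx0 : 0 ≤ c * Cn n * L * t :=
    mul_nonneg (mul_nonneg (mul_nonneg hc0 (hCn0 n)) hL) ht0
  have key : ∀ m : ℕ, m ≤ n →
      ‖prodBetween (f t) 0 m‖ ≤ c * Cn n * Real.exp (c * Cn n * L * t * m) := by
    intro m
    induction m using Nat.strong_induction_on with
    | _ m IH =>
    intro hmn
    have step : ∀ j, j < m →
        ‖(prodBetween (f 0) (j+1) (m - (j+1))).comp
            ((vcast (Nat.zero_add (j+1))).comp (prodBetween (f t) 0 (j+1)))‖
        ≤ ‖(prodBetween (f 0) j (m - j)).comp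
            ((vcast (Nat.zero_add j)).comp (prodBetween (f t) 0 j))‖
          + ‖prodBetween (f 0) (j+1) (m - (j+1))‖ * ‖f t (0+j) - f 0 (0+j)‖
            * ‖prodBetween (f t) 0 j‖ := by
      intro j hj
      obtain ⟨k, hk⟩ : ∃ k, m - j = k + 1 := ⟨m - j - 1, by omega⟩
      have hk' : m - (j+1) = k := by omega
      rw [hk, hk']
      rw [prodBetween_succ (f t) 0 j]
      have hsplit : (f t (0+j)).comp (prodBetween (f t) 0 j)
          = ((f 0 (0+j)).comp (prodBetween (f t) 0 j))
            + ((f t (0+j) - f 0 (0+j)).comp (prodBetween (f t) 0 j)) := by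
        rw [← ContinuousLinearMap.add_comp]; congr 1; abel
      rw [hsplit, ContinuousLinearMap.comp_add, ContinuousLinearMap.comp_add]
      refine le_trans (norm_add_le _ _) (add_le_add ?_ ?_)
      · apply le_of_eq
        rw [prodBetween_bot (f 0) j k, ContinuousLinearMap.comp_assoc,
          norm_vcast_comp, ContinuousLinearMap.comp_assoc,
          ← ContinuousLinearMap.comp_assoc (f 0 j) (vcast (Nat.zero_add j))
            (prodBetween (f t) 0 j),
          comp_vcast_swap (f 0) (Nat.zero_add j) (by omega),
          ContinuousLinearMap.comp_assoc]
      · calc ‖(prodBetween (f 0) (j+1) k).comp ((vcast (Nat.zero_add (j+1))).comp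
              ((f t (0+j) - f 0 (0+j)).comp (prodBetween (f t) 0 j)))‖
            = ‖((prodBetween (f 0) (j+1) k).comp (vcast (Nat.zero_add (j+1)))).comp
              ((f t (0+j) - f 0 (0+j)).comp (prodBetween (f t) 0 j))‖ := by
              rw [ContinuousLinearMap.comp_assoc]
          _ ≤ ‖(prodBetween (f 0) (j+1) k).comp (vcast (Nat.zero_add (j+1)))‖
              * ‖(f t (0+j) - f 0 (0+j)).comp (prodBetween (f t) 0 j)‖ :=
              ContinuousLinearMap.opNorm_comp_le _ _
          _ ≤ ‖(prodBetween (f 0) (j+1) k).comp (vcast (Nat.zero_add (j+1)))‖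
              * (‖f t (0+j) - f 0 (0+j)‖ * ‖prodBetween (f t) 0 j‖) := by
              apply mul_le_mul_of_nonneg_left (ContinuousLinearMap.opNorm_comp_le _ _)
                (norm_nonneg _)
          _ = ‖prodBetween (f 0) (j+1) k‖ * ‖f t (0+j) - f 0 (0+j)‖
              * ‖prodBetween (f t) 0 j‖ := by
              rw [norm_comp_vcast, mul_assoc]
    have chain : ∀ j, j ≤ m →
        ‖(prodBetween (f 0) j (m - j)).comp
            ((vcast (Nat.zero_add j)).comp (prodBetween (f t) 0 j))‖
        ≤ c * Cn m + ∑ i ∈ Finset.range j,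
            (c * Cn n) * ((c * Cn n * L * t) * Real.exp (c * Cn n * L * t * i)) := by
      intro j
      induction j with
      | zero =>
        intro _
        simp only [Finset.range_zero, Finset.sum_empty, add_zero]
        rw [show prodBetween (f t) 0 0 = ContinuousLinearMap.id ℂ (V 0) from rfl,
          ContinuousLinearMap.comp_id, norm_comp_vcast]
        exact hseg 0 m (Nat.zero_le m)
      | succ j IHj =>
        intro hjm
        have hj : j < m := hjm
        have h1 := step j hj
        have h2 := IHj (le_of_lt hj)
        have hblk : ‖prodBetween (f 0) (j+1) (m - (j+1))‖ ≤ c * Cn n :=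
          le_trans (hseg (j+1) m hjm) (mul_le_mul_of_nonneg_left (hCmono m n hmn) hc0)
        have hD : ‖f t (0+j) - f 0 (0+j)‖ ≤ L * t := hLt (0+j)
        have hPj : ‖prodBetween (f t) 0 j‖ ≤ c * Cn n * Real.exp (c * Cn n * L * t * j) :=
          IH j hj (le_trans (le_of_lt hj) hmn)
        rw [Finset.sum_range_succ]
        have hprod : ‖prodBetween (f 0) (j+1) (m - (j+1))‖ * ‖f t (0+j) - f 0 (0+j)‖
            * ‖prodBetween (f t) 0 j‖
            ≤ (c * Cn n) * ((c * Cn n * L * t) * Real.exp (c * Cn n * L * t * j)) := by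
          have e1 : (0:ℝ) ≤ L * t := mul_nonneg hL ht0
          have e2 : (0:ℝ) ≤ c * Cn n := mul_nonneg hc0 (hCn0 n)
          calc ‖prodBetween (f 0) (j+1) (m - (j+1))‖ * ‖f t (0+j) - f 0 (0+j)‖
              * ‖prodBetween (f t) 0 j‖
              ≤ (c * Cn n) * (L * t) * (c * Cn n * Real.exp (c * Cn n * L * t * j)) := by
                apply mul_le_mul (mul_le_mul hblk hD (norm_nonneg _) e2) hPj
                  (norm_nonneg _) (mul_nonneg e2 e1)
            _ = (c * Cn n) * ((c * Cn n * L * t) * Real.exp (c * Cn n * L * t * j)) := by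
                ring
        linarith
    have hum : ‖prodBetween (f t) 0 m‖
        = ‖(prodBetween (f 0) m (m - m)).comp
            ((vcast (Nat.zero_add m)).comp (prodBetween (f t) 0 m))‖ := by
      rw [show m - m = 0 from Nat.sub_self m]
      rw [show prodBetween (f 0) m 0 = ContinuousLinearMap.id ℂ (V m) from rfl,
        ContinuousLinearMap.id_comp, norm_vcast_comp]
    have hfin := chain m le_rfl
    rw [← hum] at hfin
    have hsum := exp_sum_bound (c * Cn n * L * t) m
    have hCnm : c * Cn m ≤ c * Cn n := mul_le_mul_of_nonneg_left (hCmono m n hmn) hc0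
    have hmulsum : ∑ i ∈ Finset.range m,
        (c * Cn n) * ((c * Cn n * L * t) * Real.exp (c * Cn n * L * t * i))
        = (c * Cn n) * ∑ i ∈ Finset.range m,
            (c * Cn n * L * t) * Real.exp (c * Cn n * L * t * i) :=
      (Finset.mul_sum _ _ _).symm
    have e2 : (0:ℝ) ≤ c * Cn n := mul_nonneg hc0 (hCn0 n)
    calc ‖prodBetween (f t) 0 m‖
        ≤ c * Cn m + ∑ i ∈ Finset.range m,
            (c * Cn n) * ((c * Cn n * L * t) * Real.exp (c * Cn n * L * t * i)) := hfin
      _ ≤ c * Cn n * (1 + ∑ i ∈ Finset.range m,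
            (c * Cn n * L * t) * Real.exp (c * Cn n * L * t * i)) := by
          rw [hmulsum]; ring_nf; linarith [hCnm]
      _ ≤ c * Cn n * Real.exp (c * Cn n * L * t * m) :=
          mul_le_mul_of_nonneg_left hsum e2
  exact key n le_rfl
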